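/- For every odd integer n ≥ 1, every red-blue edge-coloring of the complete graph on 3n vertices contains a red copy of the star K_{1,n} or a blue copy of the fan F_n. -/

import Mathlib

/-- The fan `F n = K₁ + n·K₂`: vertex 0 is the center, and vertices
`2k+1, 2k+2` form the `k`-th edge of the matching, for `k < n`. -/
def fanGraph (n : ℕ) : SimpleGraph (Fin (2 * n + 1)) where
  Adj v w := v ≠ w ∧ (v = 0 ∨ w = 0 ∨ (v.val - 1) / 2 = (w.val - 1) / 2)
  symm := by
    constructor; intro v w h
    obtain ⟨h1, h2⟩ := h
    refine ⟨h1.symm, ?_⟩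
    tauto
  loopless := by constructor; intro v h; exact h.1 rfl

/-- `ContainsCopy G H` : `G` contains a subgraph isomorphic to `H`
(an injective map of vertices sending edges of `H` to edges of `G`). -/
def ContainsCopy {α β : Type*} (G : SimpleGraph α) (H : SimpleGraph β) : Prop :=
  ∃ f : β ↪ α, ∀ ⦃a b : β⦄, H.Adj a b → G.Adj (f a) (f b)

/-- The star `K_{1,n}`: vertex 0 is the center. -/
def starGraph (n : ℕ) : SimpleGraph (Fin (n + 1)) where
  Adj v w := v ≠ w ∧ (v = 0 ∨ w = 0)
  symm := by constructor; intro v w h; exact ⟨h.1.symm, h.2.symm⟩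
  loopless := by constructor; intro v h; exact h.1 rfl

open Finset

private def Dis {V : Type*} (p q : V × V) : Prop :=
  p.1 ≠ q.1 ∧ p.1 ≠ q.2 ∧ p.2 ≠ q.1 ∧ p.2 ≠ q.2

private lemma dis_symm {V : Type*} : Symmetric (Dis (V := V)) := by
  intro p q h; exact ⟨h.1.symm, h.2.2.1.symm, h.2.1.symm, h.2.2.2.symm⟩

private lemma card_le_sum_ind {V : Type*} [DecidableEq V] (l : List (V × V)) (T : Finset V)
    (hT : ∀ x ∈ T, ∃ p ∈ l, x = p.1 ∨ x = p.2) :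
    T.card ≤ ∑ p ∈ l.toFinset,
      ((if p.1 ∈ T then 1 else 0) + (if p.2 ∈ T then 1 else 0)) := by
  have hsub : T ⊆ l.toFinset.biUnion
      (fun p => ({p.1, p.2} : Finset V).filter (· ∈ T)) := by
    intro x hx
    obtain ⟨p, hp, hor⟩ := hT x hx
    simp only [Finset.mem_biUnion, Finset.mem_filter, Finset.mem_insert,
      Finset.mem_singleton, List.mem_toFinset]
    exact ⟨p, hp, hor, hx⟩
  calc T.card ≤ _ := Finset.card_le_card hsub
    _ ≤ ∑ p ∈ l.toFinset, (({p.1, p.2} : Finset V).filter (· ∈ T)).card :=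
        Finset.card_biUnion_le
    _ ≤ _ := by
        apply Finset.sum_le_sum
        intro p _
        by_cases h1 : p.1 ∈ T <;> by_cases h2 : p.2 ∈ T <;>
          simp [Finset.filter_insert, Finset.filter_singleton, h1, h2] <;>
          first
          | exact Finset.card_insert_le _ _
          | skip

private lemma exists_matching {V : Type*} [DecidableEq V] (G : SimpleGraph V)
    [DecidableRel G.Adj] (S : Finset V) (n : ℕ) (hS : 2 * n ≤ S.card)
    (hdeg : ∀ u ∈ S, n ≤ (S.filter (fun x => G.Adj u x)).card) :
    ∃ l : List (V × V), l.length = n ∧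
      (∀ p ∈ l, p.1 ∈ S ∧ p.2 ∈ S ∧ G.Adj p.1 p.2) ∧ l.Pairwise Dis := by
  suffices h : ∀ k, k ≤ n → ∃ l : List (V × V), l.length = k ∧
      (∀ p ∈ l, p.1 ∈ S ∧ p.2 ∈ S ∧ G.Adj p.1 p.2) ∧ l.Pairwise Dis from
    h n le_rfl
  intro k hk
  induction k with
  | zero => exact ⟨[], rfl, by simp, by simp⟩
  | succ k ih =>
    obtain ⟨l, hlen, hmem, hpair⟩ := ih (Nat.le_of_succ_le hk)
    have hnodup : l.Nodup := hpair.imp (fun h => fun e => h.1 (by rw [e]))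
    -- covered set
    set C : Finset V := l.toFinset.biUnion (fun p => ({p.1, p.2} : Finset V)) with hC
    have hCmem : ∀ x, x ∈ C ↔ ∃ p ∈ l, x = p.1 ∨ x = p.2 := by
      intro x
      simp [hC, Finset.mem_biUnion, List.mem_toFinset]
    have hCcard : C.card ≤ 2 * k := by
      calc C.card ≤ ∑ p ∈ l.toFinset, ({p.1, p.2} : Finset V).card :=
            Finset.card_biUnion_le
        _ ≤ ∑ p ∈ l.toFinset, 2 := by
            apply Finset.sum_le_sum; intro p _; exact Finset.card_insert_le _ _
        _ = 2 * l.toFinset.card := by rw [Finset.sum_const]; ring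
        _ ≤ 2 * k := by
            rw [List.toFinset_card_of_nodup hnodup, hlen]
    -- two uncovered vertices
    have h2 : 1 < (S \ C).card := by
      have := Finset.le_card_sdiff C S
      omega
    obtain ⟨u, hu, w, hw, huw⟩ := Finset.one_lt_card.mp h2
    have huS := (Finset.mem_sdiff.mp hu).1
    have huC := (Finset.mem_sdiff.mp hu).2
    have hwS := (Finset.mem_sdiff.mp hw).1
    have hwC := (Finset.mem_sdiff.mp hw).2
    set Nu := S.filter (fun x => G.Adj u x) with hNu
    set Nw := S.filter (fun x => G.Adj w x) with hNw
    by_cases hcase : ∃ x ∈ Nu, x ∉ C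
    · -- trivial extension
      obtain ⟨x, hxNu, hxC⟩ := hcase
      refine ⟨(u, x) :: l, by simp [hlen], ?_, ?_⟩
      · intro p hp
        rcases List.mem_cons.mp hp with h | h
        · subst h
          exact ⟨huS, (Finset.mem_filter.mp hxNu).1, (Finset.mem_filter.mp hxNu).2⟩
        · exact hmem p h
      · refine List.pairwise_cons.mpr ⟨?_, hpair⟩
        intro q hq
        have h1 : u ≠ q.1 := fun e => huC ((hCmem u).mpr ⟨q, hq, Or.inl e⟩)
        have h2 : u ≠ q.2 := fun e => huC ((hCmem u).mpr ⟨q, hq, Or.inr e⟩)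
        have h3 : x ≠ q.1 := fun e => hxC ((hCmem x).mpr ⟨q, hq, Or.inl e⟩)
        have h4 : x ≠ q.2 := fun e => hxC ((hCmem x).mpr ⟨q, hq, Or.inr e⟩)
        exact ⟨h1, h2, h3, h4⟩
    · by_cases hcase' : ∃ x ∈ Nw, x ∉ C
      · -- trivial extension for w
        obtain ⟨x, hxNw, hxC⟩ := hcase'
        refine ⟨(w, x) :: l, by simp [hlen], ?_, ?_⟩
        · intro p hp
          rcases List.mem_cons.mp hp with h | h
          · subst h
            exact ⟨hwS, (Finset.mem_filter.mp hxNw).1, (Finset.mem_filter.mp hxNw).2⟩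
          · exact hmem p h
        · refine List.pairwise_cons.mpr ⟨?_, hpair⟩
          intro q hq
          exact ⟨fun e => hwC ((hCmem w).mpr ⟨q, hq, Or.inl e⟩),
            fun e => hwC ((hCmem w).mpr ⟨q, hq, Or.inr e⟩),
            fun e => hxC ((hCmem x).mpr ⟨q, hq, Or.inl e⟩),
            fun e => hxC ((hCmem x).mpr ⟨q, hq, Or.inr e⟩)⟩
      · -- counting: both neighborhoods inside C
        push_neg at hcase hcase'
        have hNuT : ∀ x ∈ Nu, ∃ p ∈ l, x = p.1 ∨ x = p.2 := fun x hx =>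
          (hCmem x).mp (hcase x hx)
        have hNwT : ∀ x ∈ Nw, ∃ p ∈ l, x = p.1 ∨ x = p.2 := fun x hx =>
          (hCmem x).mp (hcase' x hx)
        have hsum : 2 * n ≤ ∑ p ∈ l.toFinset,
            (((if p.1 ∈ Nu then 1 else 0) + (if p.2 ∈ Nu then 1 else 0)) +
             ((if p.1 ∈ Nw then 1 else 0) + (if p.2 ∈ Nw then 1 else 0))) := by
          rw [Finset.sum_add_distrib]
          have h1 := card_le_sum_ind l Nu hNuT
          have h2 := card_le_sum_ind l Nw hNwT
          have h3 := hdeg u huS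
          have h4 := hdeg w hwS
          rw [← hNu] at h3
          rw [← hNw] at h4
          omega
        have hgood : ∃ p ∈ l, (p.1 ∈ Nu ∧ p.2 ∈ Nw) ∨ (p.2 ∈ Nu ∧ p.1 ∈ Nw) := by
          by_contra hg
          push_neg at hg
          have hle : ∀ p ∈ l.toFinset,
              (((if p.1 ∈ Nu then 1 else 0) + (if p.2 ∈ Nu then 1 else 0)) +
               ((if p.1 ∈ Nw then 1 else 0) + (if p.2 ∈ Nw then 1 else 0))) ≤ 2 := by
            intro p hp
            have := hg p (List.mem_toFinset.mp hp)
            by_cases h1 : p.1 ∈ Nu <;> by_cases h2 : p.2 ∈ Nu <;>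
              by_cases h3 : p.1 ∈ Nw <;> by_cases h4 : p.2 ∈ Nw <;>
              simp [h1, h2, h3, h4] at this ⊢ <;> tauto
          have := Finset.sum_le_sum hle
          rw [Finset.sum_const, List.toFinset_card_of_nodup hnodup, hlen,
            smul_eq_mul] at this
          omega
        obtain ⟨p, hpl, hgood⟩ := hgood
        -- build augmented matching
        have hpS := hmem p hpl
        have herase : ∀ q ∈ l.erase p, q ∈ l ∧ q ≠ p := by
          intro q hq
          have := (List.Nodup.mem_erase_iff hnodup).mp hq
          exact ⟨this.2, this.1⟩
        have hdisq : ∀ q ∈ l.erase p, Dis p q := by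
          intro q hq
          obtain ⟨hql, hqp⟩ := herase q hq
          haveI : Std.Symm (Dis (V := V)) := ⟨fun _ _ h => dis_symm h⟩
          exact List.Pairwise.forall hpair hpl hql (Ne.symm hqp)
        have hlen' : (l.erase p).length = k - 1 := by
          rw [List.length_erase_of_mem hpl, hlen]
        have hkpos : 1 ≤ k := by
          rcases Nat.eq_zero_or_pos k with h | h
          · exfalso; subst h
            rw [List.length_eq_zero_iff] at hlen; subst hlen; simp at hpl
          · exact h
        have hpairerase : (l.erase p).Pairwise Dis :=
          List.Pairwise.sublist List.erase_sublist hpair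
        -- choose endpoints a (matched to u) and b (matched to w)
        obtain ⟨a, b, ha, hb, hab⟩ :
            ∃ a b, a ∈ Nu ∧ b ∈ Nw ∧
              ((a = p.1 ∧ b = p.2) ∨ (a = p.2 ∧ b = p.1)) := by
          rcases hgood with ⟨h1, h2⟩ | ⟨h1, h2⟩
          · exact ⟨p.1, p.2, h1, h2, Or.inl ⟨rfl, rfl⟩⟩
          · exact ⟨p.2, p.1, h1, h2, Or.inr ⟨rfl, rfl⟩⟩
        have hne12 : p.1 ≠ p.2 := (hmem p hpl).2.2.ne
        have haS : a ∈ S := by rcases hab with ⟨e, _⟩ | ⟨e, _⟩ <;> rw [e] <;> tauto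
        have hbS : b ∈ S := by
          rcases hab with ⟨_, e⟩ | ⟨_, e⟩ <;> rw [e] <;> tauto
        have hanb : a ≠ b := by
          rcases hab with ⟨e1, e2⟩ | ⟨e1, e2⟩ <;> rw [e1, e2]
          · exact hne12
          · exact hne12.symm
        have hup : ∀ x, (x = p.1 ∨ x = p.2) → u ≠ x ∧ w ≠ x := fun x hx =>
          ⟨fun e => huC ((hCmem u).mpr ⟨p, hpl, hx.imp e.trans e.trans⟩),
           fun e => hwC ((hCmem w).mpr ⟨p, hpl, hx.imp e.trans e.trans⟩)⟩
        have hua : u ≠ a ∧ w ≠ a := by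
          apply hup
          rcases hab with ⟨e, _⟩ | ⟨e, _⟩
          · exact Or.inl e
          · exact Or.inr e
        have hub : u ≠ b ∧ w ≠ b := by
          apply hup
          rcases hab with ⟨_, e⟩ | ⟨_, e⟩
          · exact Or.inr e
          · exact Or.inl e
        have habq : ∀ q ∈ l.erase p, a ≠ q.1 ∧ a ≠ q.2 ∧ b ≠ q.1 ∧ b ≠ q.2 := by
          intro q hq
          obtain ⟨d1, d2, d3, d4⟩ := hdisq q hq
          rcases hab with ⟨e1, e2⟩ | ⟨e1, e2⟩ <;> rw [e1, e2]
          · exact ⟨d1, d2, d3, d4⟩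
          · exact ⟨d3, d4, d1, d2⟩
        have huwq : ∀ q ∈ l.erase p, (u ≠ q.1 ∧ u ≠ q.2) ∧ (w ≠ q.1 ∧ w ≠ q.2) := by
          intro q hq
          have hql := (herase q hq).1
          exact ⟨⟨fun e => huC ((hCmem u).mpr ⟨q, hql, Or.inl e⟩),
              fun e => huC ((hCmem u).mpr ⟨q, hql, Or.inr e⟩)⟩,
            ⟨fun e => hwC ((hCmem w).mpr ⟨q, hql, Or.inl e⟩),
              fun e => hwC ((hCmem w).mpr ⟨q, hql, Or.inr e⟩)⟩⟩
        refine ⟨(u, a) :: (w, b) :: l.erase p, by simp [hlen']; omega, ?_, ?_⟩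
        · intro q hq
          rcases List.mem_cons.mp hq with h | h
          · subst h; exact ⟨huS, haS, (Finset.mem_filter.mp ha).2⟩
          rcases List.mem_cons.mp h with h | h
          · subst h; exact ⟨hwS, hbS, (Finset.mem_filter.mp hb).2⟩
          · exact hmem q (herase q h).1
        · refine List.pairwise_cons.mpr ⟨?_, List.pairwise_cons.mpr ⟨?_, hpairerase⟩⟩
          · intro q hq
            rcases List.mem_cons.mp hq with h | h
            · subst h; exact ⟨huw, hub.1, hua.2.symm, hanb⟩
            · have h1 := habq q h
              have h2 := huwq q h
              exact ⟨h2.1.1, h2.1.2, h1.1, h1.2.1⟩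
          · intro q hq
            have h1 := habq q hq
            have h2 := huwq q hq
            exact ⟨h2.2.1, h2.2.2, h1.2.2.1, h1.2.2.2⟩

/-- For every odd `n ≥ 1`, every red-blue coloring of `K_{3n}` contains a red
`K_{1,n}` or a blue `F_n`. -/
theorem star_fan_upper_odd (n : ℕ) (hn : 1 ≤ n) (hodd : Odd n)
    (R : SimpleGraph (Fin (3 * n))) :
    ContainsCopy R (starGraph n) ∨ ContainsCopy Rᶜ (fanGraph n) := by
  classical
  by_cases hstar : ∃ v : Fin (3 * n), n ≤ (R.neighborFinset v).card
  · left
    obtain ⟨v, hv⟩ := hstar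
    obtain ⟨T, hTsub, hTcard⟩ := Finset.exists_subset_card_eq hv
    set g : Fin n → Fin (3 * n) :=
      fun i => (T.equivFin.symm (Fin.cast hTcard.symm i) : Fin (3 * n)) with hg
    have hginj : Function.Injective g := by
      intro i j hij
      have h2 := T.equivFin.symm.injective (Subtype.val_injective hij)
      simpa [Fin.ext_iff] using congrArg Fin.val h2
    have hgT : ∀ i, g i ∈ T := fun i => (T.equivFin.symm _).2
    have hvT : v ∉ T := by
      intro h
      exact R.loopless.irrefl v ((R.mem_neighborFinset v v).mp (hTsub h))
    set f : Fin (n + 1) → Fin (3 * n) := fun i =>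
      if h : i.val = 0 then v else g ⟨i.val - 1, by have := i.isLt; omega⟩ with hf
    have hfinj : Function.Injective f := by
      intro i j hij
      by_cases hi : i.val = 0 <;> by_cases hj : j.val = 0
      · exact Fin.ext (hi.trans hj.symm)
      · exfalso
        simp only [hf, dif_pos hi, dif_neg hj] at hij
        exact hvT (hij ▸ hgT _)
      · exfalso
        simp only [hf, dif_neg hi, dif_pos hj] at hij
        exact hvT (hij.symm ▸ hgT _)
      · simp only [hf, dif_neg hi, dif_neg hj] at hij
        have := congrArg Fin.val (hginj hij)
        simp only at this
        have := i.isLt; have := j.isLt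
        apply Fin.ext; omega
    have key : ∀ x y : Fin (n + 1), x.val = 0 → y.val ≠ 0 → R.Adj (f x) (f y) := by
      intro x y hx hy
      simp only [hf, dif_pos hx, dif_neg hy]
      exact (R.mem_neighborFinset v _).mp (hTsub (hgT _))
    refine ⟨⟨f, hfinj⟩, ?_⟩
    intro a b hab
    obtain ⟨hne, h0⟩ : a ≠ b ∧ (a = 0 ∨ b = 0) := hab
    rcases h0 with h0 | h0
    · refine key a b (by simp [h0]) ?_
      intro hb
      exact hne (by rw [h0]; exact (Fin.ext (by simp [hb])).symm)
    · refine (key b a (by simp [h0]) ?_).symm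
      intro ha
      exact hne (by rw [h0]; exact Fin.ext (by simp [ha]))
  · right
    push_neg at hstar
    have hstar' : ∀ u : Fin (3 * n), (R.neighborFinset u).card ≤ n - 1 := by
      intro u; have := hstar u; omega
    have hpos : 0 < 3 * n := by omega
    set v : Fin (3 * n) := ⟨0, hpos⟩ with hv
    set S := Rᶜ.neighborFinset v with hSdef
    have hSmem : ∀ x, x ∈ S ↔ Rᶜ.Adj v x := fun x => Rᶜ.mem_neighborFinset v x
    have hSv : v ∉ S := by
      intro h; exact Rᶜ.loopless.irrefl v ((hSmem v).mp h)
    have hScard : 2 * n ≤ S.card := by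
      have hsub : (insert v (R.neighborFinset v))ᶜ ⊆ S := by
        intro x hx
        rw [Finset.mem_compl, Finset.mem_insert] at hx
        push_neg at hx
        rw [hSmem, SimpleGraph.compl_adj]
        refine ⟨fun e => hx.1 e.symm, fun h => hx.2 ((R.mem_neighborFinset v x).mpr h)⟩
      have h1 := Finset.card_le_card hsub
      have h2 : (insert v (R.neighborFinset v))ᶜ.card =
          Fintype.card (Fin (3 * n)) - (insert v (R.neighborFinset v)).card :=
        Finset.card_compl _
      have h3 : (insert v (R.neighborFinset v)).card ≤ (R.neighborFinset v).card + 1 :=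
        Finset.card_insert_le _ _
      have h4 := hstar' v
      have h5 : Fintype.card (Fin (3 * n)) = 3 * n := Fintype.card_fin _
      omega
    have hdeg : ∀ u ∈ S, n ≤ (S.filter (fun x => Rᶜ.Adj u x)).card := by
      intro u huS
      have hsub : S \ insert u (R.neighborFinset u) ⊆ S.filter (fun x => Rᶜ.Adj u x) := by
        intro x hx
        rw [Finset.mem_sdiff, Finset.mem_insert] at hx
        push_neg at hx
        rw [Finset.mem_filter]
        refine ⟨hx.1, SimpleGraph.compl_adj R u x |>.mpr
          ⟨fun e => hx.2.1 e.symm, fun h => hx.2.2 ((R.mem_neighborFinset u x).mpr h)⟩⟩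
      have h1 := Finset.card_le_card hsub
      have h2 := Finset.le_card_sdiff (insert u (R.neighborFinset u)) S
      have h3 : (insert u (R.neighborFinset u)).card ≤ (R.neighborFinset u).card + 1 :=
        Finset.card_insert_le _ _
      have h4 := hstar' u
      omega
    obtain ⟨l, hlen, hmem, hpair⟩ := exists_matching Rᶜ S n hScard hdeg
    have hidx : ∀ i : Fin (2 * n + 1), i.val ≠ 0 → (i.val - 1) / 2 < l.length := by
      intro i hi; have := i.isLt; omega
    set f : Fin (2 * n + 1) → Fin (3 * n) := fun i =>
      if h : i.val = 0 then v
      else if (i.val - 1) % 2 = 0 then (l.get ⟨(i.val - 1) / 2, hidx i h⟩).1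
        else (l.get ⟨(i.val - 1) / 2, hidx i h⟩).2 with hf
    have hfS : ∀ (i : Fin (2 * n + 1)) (hi : i.val ≠ 0), f i ∈ S := by
      intro i hi
      have hm := hmem _ (l.get_mem ⟨_, hidx i hi⟩)
      simp only [hf, dif_neg hi]
      split
      · exact hm.1
      · exact hm.2.1
    have hfinj : Function.Injective f := by
      intro i j hij
      by_cases hi : i.val = 0 <;> by_cases hj : j.val = 0
      · exact Fin.ext (hi.trans hj.symm)
      · exfalso
        have : f j ∈ S := hfS j hj
        rw [← hij] at this
        simp only [hf, dif_pos hi] at this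
        exact hSv this
      · exfalso
        have : f i ∈ S := hfS i hi
        rw [hij] at this
        simp only [hf, dif_pos hj] at this
        exact hSv this
      · set ki : Fin l.length := ⟨(i.val - 1) / 2, hidx i hi⟩ with hki
        set kj : Fin l.length := ⟨(j.val - 1) / 2, hidx j hj⟩ with hkj
        by_cases hk : ki = kj
        · -- same pair: parity decides
          by_cases hpi : (i.val - 1) % 2 = 0 <;> by_cases hpj : (j.val - 1) % 2 = 0
          · apply Fin.ext
            have e1 : (i.val - 1) / 2 = (j.val - 1) / 2 := congrArg Fin.val hk
            have := i.isLt; have := j.isLt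
            omega
          · exfalso
            simp only [hf, dif_neg hi, dif_neg hj, if_pos hpi, if_neg hpj] at hij
            rw [← hki, ← hkj, hk] at hij
            exact (hmem _ (l.get_mem kj)).2.2.ne hij
          · exfalso
            simp only [hf, dif_neg hi, dif_neg hj, if_neg hpi, if_pos hpj] at hij
            rw [← hki, ← hkj, hk] at hij
            exact (hmem _ (l.get_mem kj)).2.2.ne hij.symm
          · apply Fin.ext
            have e1 : (i.val - 1) / 2 = (j.val - 1) / 2 := congrArg Fin.val hk
            have := i.isLt; have := j.isLt
            omega
        · -- different pairs: disjointness
          exfalso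
          have hdis : Dis (l.get ki) (l.get kj) := by
            have hkk : (ki : ℕ) ≠ (kj : ℕ) := fun e => hk (Fin.ext e)
            rcases lt_or_gt_of_ne hkk with h | h
            · exact List.pairwise_iff_get.mp hpair ki kj h
            · exact dis_symm (List.pairwise_iff_get.mp hpair kj ki h)
          obtain ⟨d1, d2, d3, d4⟩ := hdis
          simp only [hf, dif_neg hi, dif_neg hj, ← hki, ← hkj] at hij
          split at hij <;> split at hij
          · exact d1 hij
          · exact d2 hij
          · exact d3 hij
          · exact d4 hij
    have hadjv : ∀ (y : Fin (2 * n + 1)), y.val ≠ 0 → Rᶜ.Adj v (f y) := by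
      intro y hy
      exact (hSmem (f y)).mp (hfS y hy)
    refine ⟨⟨f, hfinj⟩, ?_⟩
    intro a b hab
    show Rᶜ.Adj (f a) (f b)
    obtain ⟨hne, h0⟩ : a ≠ b ∧ (a = 0 ∨ b = 0 ∨ (a.val - 1) / 2 = (b.val - 1) / 2) := hab
    by_cases ha : a.val = 0
    · have hb : b.val ≠ 0 := by
        intro hb; exact hne (Fin.ext (ha.trans hb.symm))
      have : f a = v := by simp only [hf, dif_pos ha]
      rw [this]
      exact hadjv b hb
    · by_cases hb : b.val = 0
      · have : f b = v := by simp only [hf, dif_pos hb]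
        rw [this]
        exact (hadjv a ha).symm
      · -- both nonzero; same pair
        have hk : (a.val - 1) / 2 = (b.val - 1) / 2 := by
          rcases h0 with h | h | h
          · exact absurd (congrArg Fin.val h) ha
          · exact absurd (congrArg Fin.val h) hb
          · exact h
        set k : Fin l.length := ⟨(a.val - 1) / 2, hidx a ha⟩ with hkdef
        have hkb : (⟨(b.val - 1) / 2, hidx b hb⟩ : Fin l.length) = k :=
          Fin.ext hk.symm
        have hadj := (hmem _ (l.get_mem k)).2.2
        have hpar : (a.val - 1) % 2 ≠ (b.val - 1) % 2 := by
          intro hp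
          apply hne; apply Fin.ext
          have := a.isLt; have := b.isLt
          omega
        simp only [hf, dif_neg ha, dif_neg hb, ← hkdef, hkb]
        by_cases hpa : (a.val - 1) % 2 = 0
        · have hpb : ¬ (b.val - 1) % 2 = 0 := by omega
          rw [if_pos hpa, if_neg hpb]
          exact hadj
        · have hpb : (b.val - 1) % 2 = 0 := by omega
          rw [if_neg hpa, if_pos hpb]
          exact hadj.symm
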